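/- Let g be a Lie algebra over a field K with [g,g] = g, let A be a commutative associative K-algebra, and let h be a Lie subalgebra of g ⊗ A. Then the set Z = { f ∈ A | g ⊗ f ⊆ h } (i.e. x ⊗ f ∈ h for all x ∈ g) is a (non-unital) subring of A, i.e. it is a K-subspace closed under multiplication. Moreover, if h has finite codimension in g ⊗ A and g is finite-dimensional nonzero, then Z has finite codimension in A. -/

import Mathlib

open scoped TensorProduct

/-- The current Lie algebra `g ⊗ A` (realized as `A ⊗[K] g`) is a Lie algebra
over `K`. -/
noncomputable instance tensorLieAlgebra {K A L : Type*} [Field K] [CommRing A] [Algebra K A]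
    [LieRing L] [LieAlgebra K L] : LieAlgebra K (A ⊗[K] L) where
  lie_smul t x y := by
    rw [← algebraMap_smul A t y, lie_smul, algebraMap_smul]

/-- Let `g` be a Lie algebra with `[g,g] = g`, `A` a commutative associative
`K`-algebra, and `h` a Lie subalgebra of `g ⊗ A`.  Then
`Z = { f ∈ A | g ⊗ f ⊆ h }` is a `K`-subspace of `A` closed under multiplication;
moreover if `h` has finite codimension and `g` is finite-dimensional and nonzero,
then `Z` has finite codimension in `A`. -/
theorem subring_of_subalgebra_tensor
    (K : Type*) [Field K]
    (g : Type*) [LieRing g] [LieAlgebra K g]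
    (hperf : ⁅(⊤ : LieIdeal K g), (⊤ : LieIdeal K g)⁆ = ⊤)
    (A : Type*) [CommRing A] [Algebra K A]
    (h : LieSubalgebra K (A ⊗[K] g)) :
    ∃ Z : Submodule K A,
      (∀ f : A, f ∈ Z ↔ ∀ x : g, f ⊗ₜ[K] x ∈ h) ∧
      (∀ f ∈ Z, ∀ f' ∈ Z, f * f' ∈ Z) ∧
      (FiniteDimensional K ((A ⊗[K] g) ⧸ h.toSubmodule) →
        FiniteDimensional K g → Nontrivial g →
        FiniteDimensional K (A ⧸ Z)) := by
  classical
  set Ψ : A →ₗ[K] (g →ₗ[K] ((A ⊗[K] g) ⧸ h.toSubmodule)) :=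
    (LinearMap.llcomp K g (A ⊗[K] g) _ h.toSubmodule.mkQ).comp (TensorProduct.mk K A g) with hΨ
  have hker : ∀ f : A, f ∈ LinearMap.ker Ψ ↔ ∀ x : g, f ⊗ₜ[K] x ∈ h := by
    intro f
    rw [LinearMap.mem_ker, LinearMap.ext_iff]
    constructor <;> intro hx x <;> have := hx x <;>
      simpa [hΨ, Submodule.Quotient.mk_eq_zero] using this
  refine ⟨LinearMap.ker Ψ, hker, ?_, ?_⟩
  · intro f hf f' hf'
    rw [hker] at hf hf' ⊢
    intro x
    have hspan := LieSubmodule.lieIdeal_oper_eq_linear_span'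
      (R := K) (L := g) (M := g) (I := ⊤) (N := ⊤)
    rw [hperf] at hspan
    have hxspan : x ∈ Submodule.span K
        { m | ∃ y ∈ (⊤ : LieIdeal K g), ∃ z ∈ (⊤ : LieIdeal K g), ⁅y, z⁆ = m } := by
      rw [← hspan]
      simp
    have hle : Submodule.span K
        { m | ∃ y ∈ (⊤ : LieIdeal K g), ∃ z ∈ (⊤ : LieIdeal K g), ⁅y, z⁆ = m } ≤
        Submodule.comap ((TensorProduct.mk K A g) (f * f')) h.toSubmodule := by
      rw [Submodule.span_le]
      rintro _ ⟨y, -, z, -, rfl⟩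
      have hb : (f * f') ⊗ₜ[K] ⁅y, z⁆ = ⁅f ⊗ₜ[K] y, f' ⊗ₜ[K] z⁆ := rfl
      simp only [Submodule.mem_comap, TensorProduct.mk_apply, SetLike.mem_coe]
      rw [hb]
      exact h.lie_mem (hf y) (hf' z)
    simpa using hle hxspan
  · intro hQ hg _
    have : FiniteDimensional K (g →ₗ[K] ((A ⊗[K] g) ⧸ h.toSubmodule)) := inferInstance
    exact Module.Finite.equiv (Ψ.quotKerEquivRange).symm
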